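/- arXiv:1907.08344 — 2 statements merged into one kernel-verified Lean document; each statement's English description precedes it below -/
import Mathlib

section
/- Let A = K[x_1,...,x_d] be a polynomial ring over a field K with maximal ideal m = (x_1,...,x_d). For every ε > 0 there exists N > 0 such that for any m-primary monomial ideal J whose order (the largest n with J ⊆ m^n) is at least N, the minimal number of generators μ(J) satisfies μ(J) < ε · length(A/J). -/
open IsLocalRing Filter

/-- Length of a module (as a natural number): the Krull dimension of its submodule lattice. -/
noncomputable def flength (R M : Type*) [Ring R] [AddCommGroup M] [Module R M] : ℕ :=
  (WithBot.unbotD 0 (Order.krullDim (Submodule R M))).toNat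

/-- Minimal number of generators of a submodule. -/
noncomputable def mu (R : Type*) {M : Type*} [Ring R] [AddCommGroup M] [Module R M]
    (N : Submodule R M) : ℕ :=
  sInf {n | ∃ s : Finset M, s.card = n ∧ Submodule.span R (s : Set M) = N}

/-- Hilbert–Samuel multiplicity of an ideal in a `d`-dimensional local ring. -/
noncomputable def eMult (R : Type*) [CommRing R] (d : ℕ) (I : Ideal R) : ℝ :=
  Filter.limsup
    (fun n : ℕ => (d.factorial : ℝ) * (flength R (R ⧸ I ^ n) : ℝ) / (n : ℝ) ^ d)
    Filter.atTop

/-- An ideal of a local ring is `m`-primary. -/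
def IsMPrimary (R : Type*) [CommRing R] [IsLocalRing R] (I : Ideal R) : Prop :=
  I ≠ ⊤ ∧ ∃ k : ℕ, maximalIdeal R ^ k ≤ I

/-- A commutative ring is regular local. -/
def IsRegularLocal (A : Type*) [CommRing A] : Prop :=
  IsNoetherianRing A ∧ ∃ _ : IsLocalRing A,
    ringKrullDim A = (mu A (IsLocalRing.maximalIdeal A) : WithBot ℕ∞)

/-- Length of `J/I` for ideals `I ≤ J`. -/
noncomputable def qlen (R : Type*) [CommRing R] (I J : Ideal R) : ℕ :=
  flength R (Submodule.map (Submodule.mkQ (I : Submodule R R)) (J : Submodule R R))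


namespace Stmt0Aux

open MvPolynomial

variable {K : Type*} [Field K] {d : ℕ}

local notation "R" => MvPolynomial (Fin d) K




/-- total degree of an exponent vector -/
def deg (s : Fin d →₀ ℕ) : ℕ := ∑ i, s i

lemma deg_add (s t : Fin d →₀ ℕ) : deg (s + t) = deg s + deg t := by
  simp [deg, Finset.sum_add_distrib]

lemma deg_mono {s t : Fin d →₀ ℕ} (h : s ≤ t) : deg s ≤ deg t :=
  Finset.sum_le_sum fun i _ => h i

lemma apply_le_deg (s : Fin d →₀ ℕ) (i : Fin d) : s i ≤ deg s :=
  Finset.single_le_sum (fun _ _ => Nat.zero_le _) (Finset.mem_univ i)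

lemma deg_single (i : Fin d) (n : ℕ) : deg (Finsupp.single i n) = n := by
  simp [deg, Finsupp.single_apply]

lemma deg_eq_zero {s : Fin d →₀ ℕ} (h : deg s = 0) : s = 0 := by
  ext i
  exact Nat.le_zero.mp (h ▸ apply_le_deg s i)

/-- the monomial ideal with exponent set U -/
noncomputable def mIdeal (U : Set (Fin d →₀ ℕ)) : Ideal R :=
  Ideal.span ((fun s => monomial s (1 : K)) '' U)

def Upward (U : Set (Fin d →₀ ℕ)) : Prop := ∀ ⦃s t : Fin d →₀ ℕ⦄, s ∈ U → s ≤ t → t ∈ U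

lemma mem_mIdeal {U : Set (Fin d →₀ ℕ)} (hU : Upward U) {p : R} :
    p ∈ mIdeal (K := K) U ↔ ∀ t ∈ p.support, t ∈ U := by
  rw [mIdeal, mem_ideal_span_monomial_image]
  exact forall₂_congr fun t _ => ⟨fun ⟨s, hs, hst⟩ => hU hs hst, fun h => ⟨t, h, le_rfl⟩⟩

lemma monomial_mem_mIdeal {U : Set (Fin d →₀ ℕ)} (hU : Upward U) {t : Fin d →₀ ℕ} :
    monomial t (1 : K) ∈ mIdeal (K := K) U ↔ t ∈ U := by
  classical
  rw [mem_mIdeal hU, support_monomial]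
  simp

lemma mIdeal_mono {U V : Set (Fin d →₀ ℕ)} (h : U ⊆ V) :
    mIdeal (K := K) U ≤ mIdeal (K := K) V :=
  Ideal.span_mono (Set.image_mono h)

lemma mIdeal_univ : mIdeal (K := K) (Set.univ : Set (Fin d →₀ ℕ)) = ⊤ := by
  rw [eq_top_iff, ← Ideal.span_singleton_one]
  apply Ideal.span_mono
  intro x hx
  rw [Set.mem_singleton_iff] at hx
  exact ⟨0, Set.mem_univ _, by simp [hx]⟩

lemma upward_degree_ge (n : ℕ) : Upward {s : Fin d →₀ ℕ | n ≤ deg s} :=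
  fun s t hs hst => le_trans hs (deg_mono hst)

/-- X^s = monomial s 1 in terms of X i -/
lemma X_mul_monomial (i : Fin d) (t : Fin d →₀ ℕ) :
    (X i : R) * monomial t (1 : K) = monomial (t + Finsupp.single i 1) (1 : K) := by
  rw [X, monomial_mul, one_mul, add_comm]

lemma span_range_X_eq : Ideal.span (Set.range (X : Fin d → R)) =
    mIdeal (K := K) {s | 1 ≤ deg s} := by
  apply le_antisymm
  · rw [Ideal.span_le]
    rintro _ ⟨i, rfl⟩
    have : (X i : R) = monomial (Finsupp.single i 1) (1 : K) := rfl
    rw [SetLike.mem_coe, this, monomial_mem_mIdeal (upward_degree_ge 1)]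
    simp [deg_single]
  · rw [mIdeal, Ideal.span_le]
    rintro _ ⟨s, hs, rfl⟩
    have hs0 : s ≠ 0 := fun h => by simp [h, deg] at hs
    obtain ⟨i, hi⟩ : ∃ i, s i ≠ 0 := by
      by_contra h
      push_neg at h
      exact hs0 (Finsupp.ext h)
    have hle : Finsupp.single i 1 ≤ s := by
      rw [Finsupp.single_le_iff]
      omega
    have : monomial s (1 : K) = (X i : R) * monomial (s - Finsupp.single i 1) (1 : K) := by
      rw [X_mul_monomial, tsub_add_cancel_of_le hle]
    show monomial s (1 : K) ∈ Ideal.span (Set.range (X : Fin d → R))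
    rw [this]
    exact Ideal.mul_mem_right _ _ (Ideal.subset_span ⟨i, rfl⟩)

lemma monomial_mem_pow : ∀ (n : ℕ) (s : Fin d →₀ ℕ), n ≤ deg s →
    monomial s (1 : K) ∈ (Ideal.span (Set.range (X : Fin d → R)))^n
  | 0, s, _ => by simp
  | (n+1), s, h => by
    have hs0 : s ≠ 0 := by
      intro h0
      rw [h0] at h
      simp [deg] at h
    obtain ⟨i, hi⟩ : ∃ i, s i ≠ 0 := by
      by_contra hc
      push_neg at hc
      exact hs0 (Finsupp.ext hc)
    have hle : Finsupp.single i 1 ≤ s := by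
      rw [Finsupp.single_le_iff]; omega
    have hdt : n ≤ deg (s - Finsupp.single i 1) := by
      have := deg_add (s - Finsupp.single i 1) (Finsupp.single i 1)
      rw [tsub_add_cancel_of_le hle, deg_single] at this
      omega
    have hmon : monomial s (1 : K) =
        monomial (s - Finsupp.single i 1) (1 : K) * (X i : R) := by
      rw [mul_comm, X_mul_monomial, tsub_add_cancel_of_le hle]
    rw [pow_succ, hmon]
    exact Ideal.mul_mem_mul (monomial_mem_pow n _ hdt) (Ideal.subset_span ⟨i, rfl⟩)

lemma pow_le_mIdeal : ∀ n : ℕ,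
    (Ideal.span (Set.range (X : Fin d → R)))^n ≤ mIdeal (K := K) {s | n ≤ deg s}
  | 0 => by
    have : {s : Fin d →₀ ℕ | 0 ≤ deg s} = Set.univ := by
      ext s; simp
    rw [pow_zero, this, mIdeal_univ]
    exact le_top
  | (n+1) => by
    classical
    rw [pow_succ, Ideal.mul_le]
    intro r hr x hx
    have hr' : ∀ t ∈ r.support, n ≤ deg t :=
      (mem_mIdeal (upward_degree_ge n)).mp (pow_le_mIdeal n hr)
    have hx' : ∀ t ∈ x.support, 1 ≤ deg t := by
      rw [span_range_X_eq] at hx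
      exact (mem_mIdeal (upward_degree_ge 1)).mp hx
    rw [mem_mIdeal (upward_degree_ge (n+1))]
    intro t ht
    have := MvPolynomial.support_mul r x ht
    rw [Finset.mem_add] at this
    obtain ⟨a, ha, b, hb, rfl⟩ := this
    have h1 := hr' a ha
    have h2 := hx' b hb
    have h3 := deg_add a b
    show n + 1 ≤ deg (a + b)
    omega



-- end placeholders --

lemma pow_le_mIdeal' (n : ℕ) {p : R} (h : p ∈ (Ideal.span (Set.range (X : Fin d → R)))^n) :
    ∀ t ∈ p.support, n ≤ deg t :=
  (mem_mIdeal (upward_degree_ge n)).mp (pow_le_mIdeal n h)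

/-- the exponent set of an ideal -/
def expSet (J : Ideal R) : Set (Fin d →₀ ℕ) := {t | monomial t (1 : K) ∈ J}

lemma upward_expSet (J : Ideal R) : Upward (expSet J) := by
  intro s t hs hst
  have : monomial t (1 : K) = monomial (t - s) (1 : K) * monomial s (1 : K) := by
    rw [monomial_mul, one_mul, tsub_add_cancel_of_le hst]
  show monomial t (1:K) ∈ J
  rw [this]
  exact Ideal.mul_mem_left _ _ hs

lemma J_eq_mIdeal {J : Ideal R} {S : Set (Fin d →₀ ℕ)}
    (hS : J = Ideal.span ((fun s => monomial s (1 : K)) '' S)) :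
    J = mIdeal (K := K) (expSet J) := by
  apply le_antisymm
  · intro p hp
    rw [mem_mIdeal (upward_expSet J)]
    intro t ht
    rw [hS, mem_ideal_span_monomial_image] at hp
    obtain ⟨s, hs, hst⟩ := hp t ht
    have hsJ : s ∈ expSet J := by
      show monomial s (1:K) ∈ J
      rw [hS]
      exact Ideal.subset_span ⟨s, hs, rfl⟩
    exact upward_expSet J hsJ hst
  · rw [mIdeal, Ideal.span_le]
    rintro _ ⟨t, ht, rfl⟩
    exact ht

lemma mem_J_iff {J : Ideal R} {S : Set (Fin d →₀ ℕ)}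
    (hS : J = Ideal.span ((fun s => monomial s (1 : K)) '' S)) {p : R} :
    p ∈ J ↔ ∀ t ∈ p.support, t ∈ expSet J := by
  conv_lhs => rw [J_eq_mIdeal hS]
  exact mem_mIdeal (upward_expSet J)

lemma zero_not_mem_expSet {J : Ideal R} (hne : J ≠ ⊤) : 0 ∉ expSet J := by
  intro h
  exact hne (Ideal.eq_top_of_isUnit_mem _ h (by simp [monomial_zero']))

lemma degLT_finite (k : ℕ) : {t : Fin d →₀ ℕ | deg t < k}.Finite := by
  have : ∀ t : {t : Fin d →₀ ℕ | deg t < k}, ∀ i, t.1 i < k :=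
    fun t i => lt_of_le_of_lt (apply_le_deg t.1 i) t.2
  have hinj : Function.Injective
      (fun t : {t : Fin d →₀ ℕ | deg t < k} => fun i : Fin d => (⟨t.1 i, this t i⟩ : Fin k)) := by
    intro t t' h
    ext i
    exact congrArg Fin.val (congrFun h i)
  haveI : Finite {t : Fin d →₀ ℕ | deg t < k} := Finite.of_injective _ hinj
  exact Set.toFinite _

lemma compl_finite {J : Ideal R} {k : ℕ}
    (hk : (Ideal.span (Set.range (X : Fin d → R)))^k ≤ J) :
    ((expSet J)ᶜ).Finite := by
  apply (degLT_finite k).subset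
  intro t ht
  by_contra h
  simp only [Set.mem_setOf_eq, not_lt] at h
  exact ht (hk (monomial_mem_pow k t h))

/-- the minimal generators' exponents -/
def genSet (J : Ideal R) : Set (Fin d →₀ ℕ) :=
  {s ∈ expSet J | ∀ i, s i ≠ 0 → s - Finsupp.single i 1 ∉ expSet J}

lemma exists_gen_le {J : Ideal R} : ∀ n (t : Fin d →₀ ℕ), deg t ≤ n → t ∈ expSet J →
    ∃ g ∈ genSet J, g ≤ t
  | n, t, hdeg, ht => by
    by_cases hg : t ∈ genSet J
    · exact ⟨t, hg, le_rfl⟩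
    · simp only [genSet, Set.mem_setOf_eq, not_and, not_forall] at hg
      obtain ⟨i, hi, hmem⟩ := hg ht
      rw [not_not] at hmem
      have hle : Finsupp.single i 1 ≤ t := by rw [Finsupp.single_le_iff]; omega
      have hdeg' : deg (t - Finsupp.single i 1) + 1 = deg t := by
        have := deg_add (t - Finsupp.single i 1) (Finsupp.single i 1)
        rw [tsub_add_cancel_of_le hle, deg_single] at this
        omega
      have hn : 1 ≤ n := by
        have h1 := apply_le_deg t i
        omega
      obtain ⟨g, hg, hgle⟩ := exists_gen_le (n-1) (t - Finsupp.single i 1) (by omega) hmem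
      exact ⟨g, hg, le_trans hgle tsub_le_self⟩

lemma antichain_genSet {J : Ideal R} {g g' : Fin d →₀ ℕ}
    (hg : g ∈ genSet J) (hg' : g' ∈ genSet J) (hle : g ≤ g') : g = g' := by
  by_contra hne
  obtain ⟨j, hj⟩ : ∃ j, g j < g' j := by
    by_contra h
    push_neg at h
    exact hne (le_antisymm hle fun i => h i)
  have h1 : g ≤ g' - Finsupp.single j 1 := by
    intro i
    rw [Finsupp.tsub_apply, Finsupp.single_apply]
    rcases eq_or_ne j i with rfl | hji
    · simp; omega
    · simp [hji]; exact hle i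
  have h2 : g' - Finsupp.single j 1 ∈ expSet J := upward_expSet J hg.1 h1
  exact hg'.2 j (by omega) h2



lemma genSet_finite {J : Ideal R} (hne : J ≠ ⊤) {k : ℕ}
    (hk : (Ideal.span (Set.range (X : Fin d → R)))^k ≤ J) :
    (genSet J).Finite := by
  apply (degLT_finite (k+1)).subset
  intro g hg
  have hg0 : g ≠ 0 := fun h => zero_not_mem_expSet hne (h ▸ hg.1)
  obtain ⟨i, hi⟩ : ∃ i, g i ≠ 0 := by
    by_contra hc; push_neg at hc; exact hg0 (Finsupp.ext hc)
  have h1 : g - Finsupp.single i 1 ∉ expSet J := hg.2 i hi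
  have h2 : deg (g - Finsupp.single i 1) < k := by
    by_contra h
    push_neg at h
    exact h1 (hk (monomial_mem_pow k _ h))
  have hle : Finsupp.single i 1 ≤ g := by rw [Finsupp.single_le_iff]; omega
  have := deg_add (g - Finsupp.single i 1) (Finsupp.single i 1)
  rw [tsub_add_cancel_of_le hle, deg_single] at this
  show deg g < k + 1
  omega

lemma J_eq_span_genSet {J : Ideal R} {S : Set (Fin d →₀ ℕ)}
    (hS : J = Ideal.span ((fun s => monomial s (1 : K)) '' S)) :
    J = Ideal.span ((fun s => monomial s (1 : K)) '' genSet J) := by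
  apply le_antisymm
  · intro p hp
    rw [mem_ideal_span_monomial_image]
    intro t ht
    have htJ := (mem_J_iff hS).mp hp t ht
    obtain ⟨g, hg, hgle⟩ := exists_gen_le (deg t) t le_rfl htJ
    exact ⟨g, hg, hgle⟩
  · rw [Ideal.span_le]
    rintro _ ⟨g, hg, rfl⟩
    exact hg.1

lemma mu_le_card {J : Ideal R} (G : Finset (Fin d →₀ ℕ))
    (hG : J = Ideal.span ((fun s => monomial s (1 : K)) '' ↑G)) :
    mu R (J : Submodule R R) ≤ G.card := by
  classical
  have h1 : ((G.image (fun s => monomial s (1 : K)) : Finset R) : Set R) =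
      (fun s => monomial s (1 : K)) '' ↑G := Finset.coe_image
  refine le_trans (Nat.sInf_le ⟨G.image (fun s => monomial s (1 : K)), rfl, ?_⟩)
    Finset.card_image_le
  show Submodule.span R _ = (J : Submodule R R)
  rw [h1, ← Ideal.span, ← hG]

/-- The key counting bound. -/
lemma counting {J : Ideal R} (hne : J ≠ ⊤) {Q : ℕ} (hQ : 1 ≤ Q)
    (hord : J ≤ (Ideal.span (Set.range (X : Fin d → R)))^(d*Q))
    (G T : Finset (Fin d →₀ ℕ)) (hGne : G.Nonempty)
    (hGsub : ↑G ⊆ genSet J) (hT : ↑T = (expSet J)ᶜ) :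
    G.card * Q ≤ T.card * d := by
  classical
  have hd : 0 < d := by
    obtain ⟨g, hg⟩ := hGne
    have hgJ := (hGsub hg).1
    have hg0 : g ≠ 0 := fun h => zero_not_mem_expSet hne (h ▸ hgJ)
    obtain ⟨i, _⟩ : ∃ i, g i ≠ 0 := by
      by_contra hc; push_neg at hc; exact hg0 (Finsupp.ext hc)
    exact lt_of_le_of_lt (Nat.zero_le _) i.2
  have hdegG : ∀ g ∈ G, d * Q ≤ deg g := by
    intro g hg
    have hmem : monomial g (1 : K) ∈ (Ideal.span (Set.range (X : Fin d → R)))^(d*Q) :=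
      hord (hGsub hg).1
    refine pow_le_mIdeal' (d*Q) hmem g ?_
    rw [support_monomial]
    simp
  have hbig : ∀ g ∈ G, ∃ i, Q ≤ g i := by
    intro g hg
    by_contra hc
    push_neg at hc
    have h1 : deg g ≤ ∑ _i : Fin d, (Q-1) := Finset.sum_le_sum (fun i _ => by have := hc i; omega)
    rw [Finset.sum_const, Finset.card_univ, Fintype.card_fin, smul_eq_mul] at h1
    have h2 := hdegG g hg
    have h3 : d * (Q - 1) + d * 1 = d * Q := by rw [← Nat.mul_add]; congr 1; omega
    omega
  set bigIdx : (Fin d →₀ ℕ) → Fin d :=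
    fun g => if h : ∃ i, Q ≤ g i then h.choose else ⟨0, hd⟩ with hbigIdx
  have hbigIdx_spec : ∀ g ∈ G, Q ≤ g (bigIdx g) := by
    intro g hg
    rw [hbigIdx]
    simp only [dif_pos (hbig g hg)]
    exact (hbig g hg).choose_spec
  set f : (Fin d →₀ ℕ) × ℕ → (Fin d →₀ ℕ) × Fin d :=
    fun p => (p.1 - Finsupp.single (bigIdx p.1) (p.2+1), bigIdx p.1) with hf
  -- the subtracted exponent is not in expSet J (standard monomial)
  have hstd : ∀ g ∈ G, ∀ k < Q, g - Finsupp.single (bigIdx g) (k+1) ∉ expSet J := by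
    intro g hg k hk hmem
    set i := bigIdx g
    have hQi : Q ≤ g i := hbigIdx_spec g hg
    have hle : g - Finsupp.single i (k+1) ≤ g - Finsupp.single i 1 := by
      intro j
      rw [Finsupp.tsub_apply, Finsupp.tsub_apply, Finsupp.single_apply, Finsupp.single_apply]
      rcases eq_or_ne i j with rfl | hij
      · simp; omega
      · simp [hij]
    have h2 : g - Finsupp.single i 1 ∈ expSet J := upward_expSet J hmem hle
    exact (hGsub hg).2 i (by omega) h2
  have hmaps : ∀ p ∈ G ×ˢ Finset.range Q, f p ∈ T ×ˢ (Finset.univ : Finset (Fin d)) := by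
    rintro ⟨g, k⟩ hp
    rw [Finset.mem_product] at hp
    obtain ⟨hg, hk⟩ := hp
    rw [Finset.mem_range] at hk
    rw [Finset.mem_product]
    refine ⟨?_, Finset.mem_univ _⟩
    have := hstd g hg k hk
    rw [← Finset.mem_coe, hT]
    exact this
  have hinj : Set.InjOn f ↑(G ×ˢ Finset.range Q) := by
    rintro ⟨g, k⟩ hp ⟨g', k'⟩ hp' heq
    rw [Finset.coe_product, Set.mem_prod] at hp hp'
    obtain ⟨hg, hk⟩ := hp
    obtain ⟨hg', hk'⟩ := hp'
    rw [Finset.mem_coe, Finset.mem_range] at hk hk'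
    rw [Finset.mem_coe] at hg hg'
    simp only [hf, Prod.mk.injEq] at heq
    obtain ⟨hsub, hidx⟩ := heq
    set i := bigIdx g'
    rw [hidx] at hsub
    have hQi : Q ≤ g i := hidx ▸ hbigIdx_spec g hg
    have hQi' : Q ≤ g' i := hbigIdx_spec g' hg'
    have hcoord : ∀ j, j ≠ i → g j = g' j := by
      intro j hj
      have := congrArg (fun h : Fin d →₀ ℕ => h j) hsub
      simp only [Finsupp.tsub_apply, Finsupp.single_apply] at this
      rw [if_neg (fun h => hj h.symm), if_neg (fun h => hj h.symm)] at this
      omega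
    have hati : g i - (k+1) = g' i - (k'+1) := by
      have := congrArg (fun h : Fin d →₀ ℕ => h i) hsub
      simp only [Finsupp.tsub_apply, Finsupp.single_apply, if_pos rfl] at this
      exact this
    have hgg' : g = g' := by
      rcases le_total (g i) (g' i) with h | h
      · refine antichain_genSet (hGsub hg) (hGsub hg') ?_
        intro j
        rcases eq_or_ne j i with rfl | hj
        · exact h
        · exact le_of_eq (hcoord j hj)
      · refine (antichain_genSet (hGsub hg') (hGsub hg) ?_).symm
        intro j
        rcases eq_or_ne j i with rfl | hj
        · exact h
        · exact le_of_eq (hcoord j hj).symm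
    subst hgg'
    have : k = k' := by omega
    rw [this]
  calc G.card * Q = (G ×ˢ Finset.range Q).card := by
        rw [Finset.card_product, Finset.card_range]
    _ ≤ (T ×ˢ (Finset.univ : Finset (Fin d))).card :=
        Finset.card_le_card_of_injOn f hmaps hinj
    _ = T.card * d := by rw [Finset.card_product, Finset.card_univ, Fintype.card_fin]



lemma deg_lt {s t : Fin d →₀ ℕ} (hle : s ≤ t) (hne : s ≠ t) : deg s < deg t := by
  have h1 : t = s + (t - s) := (add_tsub_cancel_of_le hle).symm
  have h2 : t - s ≠ 0 := by
    intro h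
    rw [h, add_zero] at h1
    exact hne h1.symm
  have h3 : deg (t - s) ≠ 0 := fun h => h2 (deg_eq_zero h)
  calc deg s < deg s + deg (t - s) := by omega
    _ = deg t := by rw [← deg_add, ← h1]

lemma exists_chain : ∀ (n : ℕ) (U : Set (Fin d →₀ ℕ)) (C : Finset (Fin d →₀ ℕ)),
    Upward U → (↑C = Uᶜ) → C.card = n →
    ∃ p : LTSeries (Ideal R), p.length = n ∧ p.head = mIdeal (K := K) U ∧ p.last = ⊤
  | 0, U, C, hU, hC, hcard => by
    have hCe : C = ∅ := Finset.card_eq_zero.mp hcard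
    have hUuniv : U = Set.univ := by
      rw [hCe] at hC
      simp only [Finset.coe_empty] at hC
      rw [← compl_compl U, ← hC]
      simp
    exact ⟨RelSeries.singleton _ ⊤, rfl, by simp [RelSeries.head, RelSeries.singleton,
      hUuniv, mIdeal_univ], by simp [RelSeries.last, RelSeries.singleton]⟩
  | (n+1), U, C, hU, hC, hcard => by
    have hCne : C.Nonempty := Finset.card_pos.mp (by omega)
    obtain ⟨t₀, ht₀C, ht₀max⟩ := Finset.exists_max_image C deg hCne
    have ht₀U : t₀ ∉ U := by
      have : t₀ ∈ (↑C : Set _) := ht₀C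
      rw [hC] at this
      exact this
    set U' := U ∪ {t₀} with hU'
    have hU'up : Upward U' := by
      rintro s t (hs | hs) hst
      · exact Or.inl (hU hs hst)
      · rw [Set.mem_singleton_iff] at hs
        subst hs
        rcases eq_or_ne s t with rfl | hne
        · exact Or.inr rfl
        · left
          by_contra htU
          have htC : t ∈ C := by
            rw [← Finset.mem_coe, hC]
            exact htU
          have := ht₀max t htC
          exact absurd (deg_lt hst hne) (by omega)
    have hC' : ↑(C.erase t₀) = U'ᶜ := by
      rw [Finset.coe_erase, hC, hU']
      rw [Set.compl_union]
      ext x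
      simp [Set.mem_diff, and_comm]
    obtain ⟨p, hlen, hhead, hlast⟩ :=
      exists_chain n U' (C.erase t₀) hU'up hC' (by rw [Finset.card_erase_of_mem ht₀C]; omega)
    have hlt : mIdeal (K := K) U < mIdeal (K := K) U' := by
      refine lt_of_le_of_ne (mIdeal_mono Set.subset_union_left) ?_
      intro h
      have h1 : monomial t₀ (1 : K) ∈ mIdeal (K := K) U' :=
        (monomial_mem_mIdeal hU'up).mpr (Or.inr rfl)
      rw [← h, monomial_mem_mIdeal hU] at h1
      exact ht₀U h1
    refine ⟨p.cons (mIdeal (K := K) U) (hhead ▸ hlt), ?_, ?_, ?_⟩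
    · simp [RelSeries.cons_length, hlen]
    · simp [RelSeries.head_cons]
    · rw [RelSeries.last_cons, hlast]


lemma krullDim_le_finrank (F V : Type*) [DivisionRing F] [AddCommGroup V] [Module F V]
    [FiniteDimensional F V] :
    Order.krullDim (Submodule F V) ≤ ((Module.finrank F V : ℕ∞) : WithBot ℕ∞) := by
  apply iSup_le
  intro p
  have key : ∀ i : Fin (p.length + 1), (i : ℕ) ≤ Module.finrank F (p.toFun i) := by
    intro i
    induction i using Fin.induction with
    | zero => simp
    | succ i ih =>
      have hlt := p.step i
      have h2 := Submodule.finrank_lt_finrank_of_lt hlt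
      simp only [Fin.val_succ, Fin.coe_castSucc] at *
      omega
  have h1 : p.length ≤ Module.finrank F (p.toFun (Fin.last _)) := by
    have := key (Fin.last _)
    simpa using this
  have h2 : Module.finrank F (p.toFun (Fin.last _)) ≤ Module.finrank F V :=
    Submodule.finrank_le _
  exact_mod_cast le_trans h1 h2

lemma finiteDim_and_finrank {J : Ideal R} {S : Set (Fin d →₀ ℕ)}
    (hS : J = Ideal.span ((fun s => monomial s (1 : K)) '' S))
    (T : Finset (Fin d →₀ ℕ)) (hT : ↑T = (expSet J)ᶜ) :
    ∃ _ : FiniteDimensional K (R ⧸ J), Module.finrank K (R ⧸ J) = T.card := by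
  classical
  set v : ↥T → R ⧸ J :=
    fun t => Submodule.Quotient.mk (p := (J : Submodule R R)) (monomial t.1 (1 : K)) with hv
  have hli : LinearIndependent K v := by
    rw [Fintype.linearIndependent_iff]
    intro g hg
    set P : R := ∑ t : ↥T, monomial t.1 (g t) with hP
    have hPmk : Submodule.Quotient.mk (p := (J : Submodule R R)) P = 0 := by
      show (J : Submodule R R).mkQ P = 0
      rw [hP, ← hg, map_sum]
      congr 1
      ext t
      rw [hv]
      have : monomial t.1 (g t) = g t • monomial t.1 (1 : K) := by
        rw [smul_monomial, smul_eq_mul, mul_one]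
      rw [this]
      exact LinearMap.map_smul_of_tower _ _ _
    have hPJ : P ∈ J := (Submodule.Quotient.mk_eq_zero _).mp hPmk
    intro t₀
    by_contra hne
    have hcoeff : coeff t₀.1 P = g t₀ := by
      rw [hP, coeff_sum]
      rw [Finset.sum_eq_single_of_mem t₀ (Finset.mem_univ _)]
      · rw [coeff_monomial, if_pos rfl]
      · intro t _ htne
        rw [coeff_monomial, if_neg (fun h => htne (Subtype.ext h))]
    have hsupp : t₀.1 ∈ P.support := by
      rw [mem_support_iff, hcoeff]
      exact hne
    have : t₀.1 ∈ expSet J := (mem_J_iff hS).mp hPJ t₀.1 hsupp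
    have ht₀ : t₀.1 ∈ (expSet J)ᶜ := by
      rw [← hT]
      exact t₀.2
    exact ht₀ this
  have hsp : ⊤ ≤ Submodule.span K (Set.range v) := by
    rintro x -
    obtain ⟨p, rfl⟩ := Submodule.Quotient.mk_surjective (J : Submodule R R) x
    rw [show (Submodule.Quotient.mk p : R ⧸ J) =
      (J : Submodule R R).mkQ p from rfl, MvPolynomial.as_sum p, map_sum]
    apply Submodule.sum_mem
    intro c hc
    by_cases hcJ : c ∈ expSet J
    · have : monomial c (coeff c p) ∈ J := by
        have : monomial c (coeff c p) = C (coeff c p) * monomial c (1 : K) := by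
          rw [C_mul_monomial, mul_one]
        rw [this]
        exact Ideal.mul_mem_left _ _ hcJ
      have h0 : (J : Submodule R R).mkQ (monomial c (coeff c p)) = 0 := by
        rw [Submodule.mkQ_apply, Submodule.Quotient.mk_eq_zero]
        exact this
      rw [h0]
      exact Submodule.zero_mem _
    · have hcT : c ∈ T := by
        rw [← Finset.mem_coe, hT]
        exact hcJ
      have : monomial c (coeff c p) = coeff c p • monomial c (1 : K) := by
        rw [smul_monomial, smul_eq_mul, mul_one]
      rw [this, Submodule.mkQ_apply, Submodule.Quotient.mk_smul]
      exact Submodule.smul_mem _ _ (Submodule.subset_span ⟨⟨c, hcT⟩, rfl⟩)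
  let b : Module.Basis ↥T K (R ⧸ J) := Module.Basis.mk hli hsp
  haveI : FiniteDimensional K (R ⧸ J) := Module.Finite.of_basis b
  refine ⟨inferInstance, ?_⟩
  rw [Module.finrank_eq_card_basis b, Fintype.card_coe]

lemma krullDim_quotient {J : Ideal R} {S : Set (Fin d →₀ ℕ)}
    (hS : J = Ideal.span ((fun s => monomial s (1 : K)) '' S))
    (hup : Upward (expSet J))
    (T : Finset (Fin d →₀ ℕ)) (hT : ↑T = (expSet J)ᶜ) :
    Order.krullDim (Submodule R (R ⧸ J)) = ((T.card : ℕ∞) : WithBot ℕ∞) := by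
  obtain ⟨p, hlen, hhead, hlast⟩ := exists_chain (K := K) T.card (expSet J) T hup hT rfl
  have hheadJ : p.head = J := by rw [hhead, ← J_eq_mIdeal hS]
  have hle : ∀ i, (J : Submodule R R) ≤ p.toFun i := by
    intro i
    rw [← hheadJ]
    exact p.monotone (Fin.zero_le i)
  apply le_antisymm
  · calc Order.krullDim (Submodule R (R ⧸ J))
        ≤ Order.krullDim (Submodule K (R ⧸ J)) :=
          Order.krullDim_le_of_strictMono _ (Submodule.restrictScalarsEmbedding K _ _).strictMono
      _ ≤ _ := by
          obtain ⟨hfd, hfr⟩ := finiteDim_and_finrank hS T hT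
          have := krullDim_le_finrank K (R ⧸ J)
          rwa [hfr] at this
  · set q : LTSeries (Submodule R (R ⧸ J)) :=
      ⟨p.length, fun i => (Submodule.comapMkQRelIso (J : Submodule R R)).symm ⟨p.toFun i, hle i⟩,
        fun i => by
          apply (Submodule.comapMkQRelIso (J : Submodule R R)).symm.lt_iff_lt.mpr
          exact Subtype.mk_lt_mk.mpr (p.step i)⟩ with hq
    have := Order.LTSeries.length_le_krullDim q
    rw [hq] at this
    simp only [hlen] at this
    exact_mod_cast this


theorem main (K : Type*) [Field K] (d : ℕ) (ε : ℝ) (hε : 0 < ε) :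
    ∃ N : ℕ, 0 < N ∧ ∀ J : Ideal (MvPolynomial (Fin d) K),
      (∃ S : Set (Fin d →₀ ℕ),
        J = Ideal.span ((fun s => MvPolynomial.monomial s (1 : K)) '' S)) →
      J ≠ ⊤ →
      (∃ k : ℕ,
        (Ideal.span (Set.range (MvPolynomial.X : Fin d → MvPolynomial (Fin d) K))) ^ k ≤ J) →
      J ≤ (Ideal.span (Set.range (MvPolynomial.X : Fin d → MvPolynomial (Fin d) K))) ^ N →
      (mu (MvPolynomial (Fin d) K) (J : Submodule (MvPolynomial (Fin d) K) (MvPolynomial (Fin d) K)) : ℝ) <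
        ε * (flength (MvPolynomial (Fin d) K) (MvPolynomial (Fin d) K ⧸ J) : ℝ) := by
  classical
  obtain ⟨Q₀, hQ₀⟩ := exists_nat_gt ((d : ℝ) / ε)
  set Q : ℕ := Q₀ + 1 with hQdef
  have hQ1 : 1 ≤ Q := by omega
  have hdQ : (d : ℝ) < ε * Q := by
    rw [div_lt_iff₀ hε] at hQ₀
    have : (Q₀ : ℝ) ≤ Q := by exact_mod_cast Nat.le_succ Q₀
    nlinarith
  refine ⟨max 1 (d * Q), le_max_left 1 _, ?_⟩
  intro J hmonJ hne hprim hord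
  obtain ⟨S, hS⟩ := hmonJ
  obtain ⟨k, hk⟩ := hprim
  have hTfin : ((expSet J)ᶜ).Finite := compl_finite hk
  set T : Finset (Fin d →₀ ℕ) := hTfin.toFinset with hTdef
  have hT : ↑T = (expSet J)ᶜ := hTfin.coe_toFinset
  have hkd := krullDim_quotient hS (upward_expSet J) T hT
  have hflen : flength (MvPolynomial (Fin d) K) (MvPolynomial (Fin d) K ⧸ J) = T.card := by
    rw [flength, hkd]
    simp
  have hT1 : 1 ≤ T.card := by
    refine Finset.card_pos.mpr ⟨0, ?_⟩
    rw [hTdef, Set.Finite.mem_toFinset]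
    exact zero_not_mem_expSet hne
  have hGfin : (genSet J).Finite := genSet_finite hne hk
  set G : Finset (Fin d →₀ ℕ) := hGfin.toFinset with hGdef
  have hGc : ↑G = genSet J := hGfin.coe_toFinset
  have hmu : mu (MvPolynomial (Fin d) K) (J : Submodule (MvPolynomial (Fin d) K)
      (MvPolynomial (Fin d) K)) ≤ G.card := by
    refine mu_le_card G ?_
    rw [hGc]
    exact J_eq_span_genSet hS
  rw [hflen]
  rcases G.eq_empty_or_nonempty with hGe | hGne
  · have h0 : mu (MvPolynomial (Fin d) K) (J : Submodule (MvPolynomial (Fin d) K)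
        (MvPolynomial (Fin d) K)) = 0 := by
      rw [hGe] at hmu
      simpa using hmu
    rw [h0]
    have : (0:ℝ) < (T.card : ℝ) := by exact_mod_cast hT1
    simp only [Nat.cast_zero]
    nlinarith
  · -- d ≥ 1 in this case
    have hd1 : 1 ≤ d := by
      obtain ⟨g, hg⟩ := hGne
      have hgJ : g ∈ genSet J := hGc ▸ (Finset.mem_coe.mpr hg)
      have hg0 : g ≠ 0 := fun h => zero_not_mem_expSet hne (h ▸ hgJ.1)
      obtain ⟨i, _⟩ : ∃ i, g i ≠ 0 := by
        by_contra hc; push_neg at hc; exact hg0 (Finsupp.ext hc)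
      have := i.2
      omega
    have hNeq : max 1 (d * Q) = d * Q := by
      have : 1 ≤ d * Q := Nat.one_le_iff_ne_zero.mpr (by positivity)
      omega
    rw [hNeq] at hord
    have hcount : G.card * Q ≤ T.card * d :=
      counting hne hQ1 hord G T hGne (hGc ▸ subset_rfl) hT
    have hc1 : (G.card : ℝ) * Q ≤ (T.card : ℝ) * d := by exact_mod_cast hcount
    have hc2 : (mu (MvPolynomial (Fin d) K) (J : Submodule (MvPolynomial (Fin d) K)
        (MvPolynomial (Fin d) K)) : ℝ) ≤ (G.card : ℝ) := by exact_mod_cast hmu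
    have hTpos : (1:ℝ) ≤ (T.card : ℝ) := by exact_mod_cast hT1
    have hQpos : (0:ℝ) < (Q : ℝ) := by exact_mod_cast hQ1
    nlinarith [mul_lt_mul_of_pos_left hdQ (lt_of_lt_of_le zero_lt_one hTpos)]

end Stmt0Aux

/-- monomial ideals of large order in a polynomial ring have few
generators compared to colength. -/
theorem stmt_0 (K : Type*) [Field K] (d : ℕ) (ε : ℝ) (hε : 0 < ε) :
    ∃ N : ℕ, 0 < N ∧ ∀ J : Ideal (MvPolynomial (Fin d) K),
      -- `J` is a monomial ideal
      (∃ S : Set (Fin d →₀ ℕ),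
        J = Ideal.span ((fun s => MvPolynomial.monomial s (1 : K)) '' S)) →
      -- `J` is `m`-primary
      J ≠ ⊤ →
      (∃ k : ℕ,
        (Ideal.span (Set.range (MvPolynomial.X : Fin d → MvPolynomial (Fin d) K))) ^ k ≤ J) →
      -- `ord J ≥ N`, i.e. `J ⊆ m^N`
      J ≤ (Ideal.span (Set.range (MvPolynomial.X : Fin d → MvPolynomial (Fin d) K))) ^ N →
      (mu (MvPolynomial (Fin d) K) (J : Submodule (MvPolynomial (Fin d) K) (MvPolynomial (Fin d) K)) : ℝ) <
        ε * (flength (MvPolynomial (Fin d) K) (MvPolynomial (Fin d) K ⧸ J) : ℝ) := by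
  classical
  exact Stmt0Aux.main K d ε hε
end

section
/- Let R = K[[x,y]] with c = x, and for each N let I_N = (x^N, x^{N-1}y, ..., x y^{N-1}, y^{N^3}). Then I_N ⊆ m^N, length(R/I_N) = N^3 + O(N^2), length(R/(I_N, c)) = N^3, and hence lim_{N→∞} length(R/(I_N,c))/length(R/I_N) = 1. -/
open IsLocalRing Filter

/-- The ideal `I_N = (x^N, x^{N-1}y, …, x y^{N-1}, y^{N^3})` in `K[[x,y]]`. -/
noncomputable def stmtIdeal (K : Type*) [Field K] (N : ℕ) : Ideal (MvPowerSeries (Fin 2) K) :=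
  Ideal.span
    ((Set.range fun i : Fin N =>
        (MvPowerSeries.X 0 : MvPowerSeries (Fin 2) K) ^ (N - (i : ℕ)) * MvPowerSeries.X 1 ^ (i : ℕ)) ∪
      {(MvPowerSeries.X 1 : MvPowerSeries (Fin 2) K) ^ (N ^ 3)})

section Stmt13Aux
open MvPowerSeries Module
namespace Stmt13
variable {K : Type*} [Field K]

local notation "E" => (Fin 2 →₀ ℕ)
local notation "R" => MvPowerSeries (Fin 2) K

/-- monomial with coefficient 1 -/
noncomputable def mono (K : Type*) [Field K] (e : Fin 2 →₀ ℕ) : MvPowerSeries (Fin 2) K :=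
  monomial e (1 : K)

lemma coeff_mono (e n : E) : coeff n (mono K e) = if n = e then 1 else 0 :=
  coeff_monomial n e 1

/-- the vanishing ideal of an up-closed set of exponents -/
noncomputable def vIdeal (K : Type*) [Field K] (U : Set (Fin 2 →₀ ℕ))
    (hU : ∀ ⦃a b : Fin 2 →₀ ℕ⦄, a ∈ U → a ≤ b → b ∈ U) : Ideal (MvPowerSeries (Fin 2) K) where
  carrier := {f | ∀ e, e ∉ U → coeff e f = 0}
  add_mem' := by intro a b ha hb e he; rw [map_add, ha e he, hb e he, add_zero]
  zero_mem' := by intro e he; simp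
  smul_mem' := by
    classical
    intro c f hf e he
    rw [smul_eq_mul, coeff_mul]
    apply Finset.sum_eq_zero
    rintro ⟨a, b⟩ hab
    replace hab : a + b = e := by simpa using hab
    have hb : b ∉ U := fun hbU => he (hU hbU (hab ▸ le_add_self))
    rw [hf b hb, mul_zero]

lemma mem_vIdeal_iff {U : Set (Fin 2 →₀ ℕ)} {hU} {f : R} :
    f ∈ vIdeal K U hU ↔ ∀ e, e ∉ U → coeff e f = 0 := Iff.rfl

/-- the monomial ideal generated by exponents in T -/
noncomputable def idealOf (K : Type*) [Field K] (T : Finset (Fin 2 →₀ ℕ)) :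
    Ideal (MvPowerSeries (Fin 2) K) :=
  Ideal.span (mono K '' (T : Set (Fin 2 →₀ ℕ)))

/-- staircase of T -/
def stair (T : Finset (Fin 2 →₀ ℕ)) : Set (Fin 2 →₀ ℕ) := {e | ∃ a ∈ T, a ≤ e}

lemma stair_up {T : Finset (Fin 2 →₀ ℕ)} : ∀ ⦃a b : Fin 2 →₀ ℕ⦄, a ∈ stair T → a ≤ b → b ∈ stair T :=
  fun a b ⟨c, hc, hca⟩ hab => ⟨c, hc, hca.trans hab⟩

/-- key: a series supported on the staircase lies in the monomial ideal -/
lemma mem_idealOf_of_support {T : Finset (Fin 2 →₀ ℕ)} {f : R}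
    (hf : ∀ e, coeff e f ≠ 0 → e ∈ stair T) : f ∈ idealOf K T := by
  classical
  -- choice of a generator dividing each staircase exponent
  let c : E → E := fun e => if h : e ∈ stair T then h.choose else 0
  have hc1 : ∀ e (h : e ∈ stair T), c e ∈ T := by
    intro e h; simp only [c, dif_pos h]; exact h.choose_spec.1
  have hc2 : ∀ e (h : e ∈ stair T), c e ≤ e := by
    intro e h; simp only [c, dif_pos h]; exact h.choose_spec.2
  set g : E → R := fun a =>
    (fun p => if h : (p + a) ∈ stair T then (if c (p + a) = a then coeff (p + a) f else 0) else 0 :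
      MvPowerSeries (Fin 2) K) with hg
  have hgc : ∀ a p, coeff p (g a) =
      if h : (p + a) ∈ stair T then (if c (p + a) = a then coeff (p + a) f else 0) else 0 := by
    intro a p; rfl
  have key : f = ∑ a ∈ T, mono K a * g a := by
    ext e
    rw [map_sum]
    have : ∀ a ∈ T, coeff e (mono K a * g a)
        = if a ≤ e then coeff (e - a) (g a) else 0 := by
      intro a _
      rw [mono, coeff_monomial_mul]
      split <;> simp
    rw [Finset.sum_congr rfl this]
    by_cases hst : e ∈ stair T
    · rw [Finset.sum_eq_single_of_mem (c e) (hc1 e hst)]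
      · rw [if_pos (hc2 e hst), hgc, tsub_add_cancel_of_le (hc2 e hst), dif_pos hst, if_pos rfl]
      · intro b hb hbne
        split
        · rw [hgc]
          rename_i hble
          rw [tsub_add_cancel_of_le hble, dif_pos hst, if_neg (fun h => hbne h.symm)]
        · rfl
    · rw [Finset.sum_eq_zero, eq_comm]
      · by_contra h; exact hst (hf e (fun h' => h h'.symm))
      · intro b hb
        split
        · rw [hgc]
          rename_i hble
          rw [tsub_add_cancel_of_le hble, dif_neg hst]
        · rfl
  rw [key]
  exact Ideal.sum_mem _ fun a ha => Ideal.mul_mem_right _ _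
    (Ideal.subset_span ⟨a, by simpa using ha, rfl⟩)

lemma idealOf_eq_vIdeal (T : Finset (Fin 2 →₀ ℕ)) :
    idealOf K T = vIdeal K (stair T) stair_up := by
  apply le_antisymm
  · rw [idealOf, Ideal.span_le]
    rintro _ ⟨a, ha, rfl⟩ e he
    rw [coeff_mono]
    split
    · rename_i hh; exact absurd ⟨a, by simpa using ha, hh.symm.le⟩ he
    · rfl
  · intro f hf
    exact mem_idealOf_of_support fun e hne => by_contra fun h => hne (hf e h)


variable {K : Type*} [Field K]

/-- degree of an exponent -/
def deg (e : Fin 2 →₀ ℕ) : ℕ := e 0 + e 1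

lemma deg_mono {a b : Fin 2 →₀ ℕ} (h : a ≤ b) : deg a ≤ deg b := by
  have h0 := Finsupp.le_def.mp h 0
  have h1 := Finsupp.le_def.mp h 1
  unfold deg; omega

lemma eq_of_le_of_deg_le {a b : Fin 2 →₀ ℕ} (h : a ≤ b) (hd : deg b ≤ deg a) : a = b := by
  have h0 := Finsupp.le_def.mp h 0
  have h1 := Finsupp.le_def.mp h 1
  unfold deg at hd
  ext i
  fin_cases i
  · show a 0 = b 0; omega
  · show a 1 = b 1; omega

lemma vIdeal_mono {U V : Set (Fin 2 →₀ ℕ)} {hU hV} (h : U ⊆ V) :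
    vIdeal K U hU ≤ vIdeal K V hV :=
  fun _f hf e he => hf e (fun hee => he (h hee))

lemma vIdeal_congr {U V : Set (Fin 2 →₀ ℕ)} {hU hV} (h : U = V) :
    vIdeal K U hU = vIdeal K V hV := by subst h; rfl

lemma mono_mem_vIdeal {U : Set (Fin 2 →₀ ℕ)} {hU} {e : Fin 2 →₀ ℕ} (he : e ∈ U) :
    mono K e ∈ vIdeal K U hU := by
  intro n hn
  rw [coeff_mono, if_neg]
  rintro rfl; exact hn he

lemma mono_not_mem_vIdeal {U : Set (Fin 2 →₀ ℕ)} {hU} {e : Fin 2 →₀ ℕ} (he : e ∉ U) :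
    mono K e ∉ vIdeal K U hU := by
  intro h
  have := h e he
  rw [coeff_mono, if_pos rfl] at this
  exact one_ne_zero this

/-- chain of vanishing ideals obtained by adjoining the exponents of `F` one at a time. -/
lemma exists_chain (T : Finset (Fin 2 →₀ ℕ)) :
    ∀ (F : Finset (Fin 2 →₀ ℕ))
      (hup : ∀ ⦃a b : Fin 2 →₀ ℕ⦄, a ∈ stair T ∪ ↑F → a ≤ b → b ∈ stair T ∪ ↑F)
      (hdisj : ∀ e ∈ F, e ∉ stair T),
    ∃ p : LTSeries (Ideal (MvPowerSeries (Fin 2) K)),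
      p.length = F.card ∧ p.head = idealOf K T ∧ p.last = vIdeal K (stair T ∪ ↑F) hup := by
  intro F
  induction F using Finset.strongInduction with
  | _ F ih =>
    intro hup hdisj
    rcases F.eq_empty_or_nonempty with rfl | hne
    · refine ⟨RelSeries.singleton _ (idealOf K T), by simp, RelSeries.head_singleton _, ?_⟩
      rw [RelSeries.last_singleton, idealOf_eq_vIdeal]
      exact vIdeal_congr (by simp)
    · obtain ⟨e, heF, hemin⟩ := F.exists_min_image deg hne
      set F' := F.erase e with hF'
      have hsub : F' ⊂ F := Finset.erase_ssubset heF
      have hup' : ∀ ⦃a b : Fin 2 →₀ ℕ⦄, a ∈ stair T ∪ ↑F' → a ≤ b → b ∈ stair T ∪ ↑F' := by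
        rintro a b (ha | ha) hab
        · exact Or.inl (stair_up ha hab)
        · rcases hup (Or.inr (by exact_mod_cast Finset.mem_of_mem_erase (by exact_mod_cast ha))) hab
            with hb | hb
          · exact Or.inl hb
          · right
            have hbF : b ∈ F := by exact_mod_cast hb
            have haF' : a ∈ F' := by exact_mod_cast ha
            refine Finset.mem_coe.mpr (Finset.mem_erase.mpr ⟨?_, hbF⟩)
            rintro rfl
            -- a ≤ b = e, a ∈ F, min deg e: so a = e, contradiction with a ∈ F'
            have : a = b := eq_of_le_of_deg_le hab (hemin a (Finset.mem_of_mem_erase haF'))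
            exact (Finset.mem_erase.mp haF').1 this
      have hdisj' : ∀ e' ∈ F', e' ∉ stair T := fun e' he' => hdisj e' (Finset.mem_of_mem_erase he')
      obtain ⟨p, hlen, hhead, hlast⟩ := ih F' hsub hup' hdisj'
      have hlt : p.last < vIdeal K (stair T ∪ ↑F) hup := by
        rw [hlast]
        refine lt_of_le_of_ne (vIdeal_mono (Set.union_subset_union_right _ (by exact_mod_cast Finset.erase_subset e F))) ?_
        intro hcontra
        have h1 : mono K e ∈ vIdeal K (stair T ∪ ↑F) hup :=
          mono_mem_vIdeal (Or.inr (Finset.mem_coe.mpr heF))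
        rw [← hcontra] at h1
        exact mono_not_mem_vIdeal (by
          rintro (h | h)
          · exact hdisj e heF h
          · exact (Finset.mem_erase.mp (Finset.mem_coe.mp h)).1 rfl) h1
      refine ⟨p.snoc _ hlt, ?_, ?_, ?_⟩
      · rw [RelSeries.snoc_length, hlen, hF', Finset.card_erase_of_mem heF]
        have : 0 < F.card := Finset.card_pos.mpr hne
        omega
      · rw [RelSeries.head_snoc, hhead]
      · rw [RelSeries.last_snoc]

open Module

section General
variable {R₀ M : Type*} [Ring R₀] [AddCommGroup M] [Module R₀ M]

lemma flength_eq_of' (n : ℕ)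
    (hub : ∀ p : LTSeries (Submodule R₀ M), p.length ≤ n)
    (p0 : LTSeries (Submodule R₀ M)) (h0 : p0.length = n) :
    (WithBot.unbotD 0 (Order.krullDim (Submodule R₀ M))).toNat = n := by
  have h1 : Order.krullDim (Submodule R₀ M) = (n : ℕ∞) := by
    apply le_antisymm
    · rw [Order.krullDim_eq_iSup_length]
      exact_mod_cast WithBot.coe_le_coe.mpr (iSup_le fun p => Nat.cast_le.mpr (hub p))
    · simpa [h0] using Order.LTSeries.length_le_krullDim p0
  rw [h1]
  simp

variable {K₀ : Type*} [Field K₀] [Module K₀ M] [SMul K₀ R₀] [IsScalarTower K₀ R₀ M]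
  [FiniteDimensional K₀ M]

lemma length_le_finrank' (p : LTSeries (Submodule R₀ M)) : p.length ≤ finrank K₀ M := by
  let q : LTSeries ℕ := p.map (fun W => finrank K₀ (W.restrictScalars K₀))
    (fun W₁ W₂ h => Submodule.finrank_lt_finrank_of_lt
      ((Submodule.restrictScalarsEmbedding K₀ R₀ M).strictMono h))
  have h1 := q.head_add_length_le_nat
  have h2 : q.last ≤ finrank K₀ M := Submodule.finrank_le _
  have h3 : q.length = p.length := rfl
  omega
end General

/-- the coefficient-extraction map on a finite set of exponents -/
noncomputable def phi (K : Type*) [Field K] (S : Finset (Fin 2 →₀ ℕ)) :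
    MvPowerSeries (Fin 2) K →ₗ[K] (S → K) :=
  LinearMap.pi fun s => coeff s.1

lemma phi_surj (S : Finset (Fin 2 →₀ ℕ)) : Function.Surjective (phi K S) := by
  classical
  intro v
  refine ⟨∑ s ∈ S.attach, v s • mono K s.1, ?_⟩
  funext t
  simp only [phi, LinearMap.pi_apply, map_sum, map_smul, coeff_mono]
  rw [Finset.sum_eq_single_of_mem t (S.mem_attach t)]
  · simp
  · intro b _ hbt
    rw [if_neg (fun h => hbt (Subtype.ext h.symm)), smul_zero]

lemma ker_phi (T S : Finset (Fin 2 →₀ ℕ)) (hS : ∀ e, e ∈ S ↔ e ∉ stair T) :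
    LinearMap.ker (phi K S) = (idealOf K T).restrictScalars K := by
  ext f
  rw [LinearMap.mem_ker, Submodule.restrictScalars_mem, idealOf_eq_vIdeal, mem_vIdeal_iff]
  constructor
  · intro h e he
    have : e ∈ S := (hS e).mpr he
    have := congrFun h ⟨e, this⟩
    simpa [phi] using this
  · intro h
    funext s
    simp only [phi, LinearMap.pi_apply, Pi.zero_apply]
    exact h s.1 ((hS s.1).mp s.2)

/-- THE master lemma -/
lemma flength_idealOf (T S : Finset (Fin 2 →₀ ℕ)) (hS : ∀ e, e ∈ S ↔ e ∉ stair T) :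
    flength (MvPowerSeries (Fin 2) K)
      (MvPowerSeries (Fin 2) K ⧸ idealOf K T) = S.card := by
  classical
  unfold flength
  set I := idealOf K T with hI
  -- the linear equivalence
  have hker := ker_phi (K := K) T S hS
  let eqv : (MvPowerSeries (Fin 2) K ⧸ I) ≃ₗ[K] (S → K) :=
    ((Submodule.Quotient.restrictScalarsEquiv K I).symm.trans
      (Submodule.quotEquivOfEq _ _ hker.symm)).trans
      ((phi K S).quotKerEquivOfSurjective (phi_surj S))
  haveI hfd : FiniteDimensional K (MvPowerSeries (Fin 2) K ⧸ I) :=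
    Module.Finite.equiv eqv.symm
  have hfr : finrank K (MvPowerSeries (Fin 2) K ⧸ I) = S.card := by
    rw [eqv.finrank_eq, finrank_pi, Fintype.card_coe]
  -- upper bound
  have hub : ∀ p : LTSeries (Submodule (MvPowerSeries (Fin 2) K)
      (MvPowerSeries (Fin 2) K ⧸ I)), p.length ≤ S.card := by
    intro p
    have := length_le_finrank' (K₀ := K) p
    omega
  -- lower bound: chain
  have hup : ∀ ⦃a b : Fin 2 →₀ ℕ⦄, a ∈ stair T ∪ ↑S → a ≤ b → b ∈ stair T ∪ ↑S := by
    intro a b _ _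
    by_cases hb : b ∈ stair T
    · exact Or.inl hb
    · exact Or.inr (Finset.mem_coe.mpr ((hS b).mpr hb))
  obtain ⟨p, hlen, hhead, hlast⟩ := exists_chain (K := K) T S hup (fun e he => (hS e).mp he)
  have hmem : ∀ i, I ≤ p i := fun i => by
    rw [hI, ← hhead]; exact p.monotone (Fin.zero_le i)
  let q : LTSeries (Submodule (MvPowerSeries (Fin 2) K) (MvPowerSeries (Fin 2) K ⧸ I)) :=
    LTSeries.mk p.length (fun i => Submodule.map I.mkQ (p i)) (by
      intro i j hij
      refine lt_of_le_of_ne (Submodule.map_mono (p.monotone hij.le)) ?_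
      intro hcontra
      have := congrArg (Submodule.comap I.mkQ) hcontra
      rw [Submodule.comap_map_mkQ, Submodule.comap_map_mkQ, sup_eq_right.mpr (hmem i),
        sup_eq_right.mpr (hmem j)] at this
      exact (p.strictMono hij).ne this)
  exact flength_eq_of' S.card hub q (by exact hlen)

/-! ### concrete exponents -/

noncomputable def fe (a b : ℕ) : Fin 2 →₀ ℕ := Finsupp.single 0 a + Finsupp.single 1 b

@[simp] lemma fe_apply0 (a b : ℕ) : fe a b 0 = a := by
  simp [fe, Finsupp.single_apply]

@[simp] lemma fe_apply1 (a b : ℕ) : fe a b 1 = b := by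
  simp [fe, Finsupp.single_apply]

lemma fe_eq_self (e : Fin 2 →₀ ℕ) : fe (e 0) (e 1) = e := by
  ext i
  fin_cases i
  · show fe (e 0) (e 1) 0 = e 0; simp
  · show fe (e 0) (e 1) 1 = e 1; simp

lemma fe_inj {a b c d : ℕ} (h : fe a b = fe c d) : a = c ∧ b = d := by
  constructor
  · have := DFunLike.congr_fun h 0; simpa using this
  · have := DFunLike.congr_fun h 1; simpa using this

lemma fe_le_iff {a b : ℕ} {e : Fin 2 →₀ ℕ} : fe a b ≤ e ↔ a ≤ e 0 ∧ b ≤ e 1 := by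
  rw [Finsupp.le_def]
  constructor
  · intro h; exact ⟨by simpa using h 0, by simpa using h 1⟩
  · intro ⟨h0, h1⟩ i
    fin_cases i
    · show fe a b 0 ≤ e 0; simpa using h0
    · show fe a b 1 ≤ e 1; simpa using h1

lemma mono_fe (a b : ℕ) : mono K (fe a b) = X 0 ^ a * X 1 ^ b := by
  rw [X_pow_eq, X_pow_eq, monomial_mul_monomial, one_mul, mono, fe]

/-- exponents of the generators of `I_N` -/
noncomputable def TN (N : ℕ) : Finset (Fin 2 →₀ ℕ) :=
  ((Finset.range N).image fun i => fe (N - i) i) ∪ {fe 0 (N ^ 3)}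

/-- the complement of the staircase of `I_N` -/
noncomputable def SN (N : ℕ) : Finset (Fin 2 →₀ ℕ) :=
  ((Finset.range N ×ˢ Finset.range (N ^ 3)).filter fun p => p.1 + min p.2 (N - 1) < N).image
    fun p => fe p.1 p.2

lemma mem_stair_TN {N : ℕ} {e : Fin 2 →₀ ℕ} :
    e ∈ stair (TN N) ↔ (∃ i < N, N - i ≤ e 0 ∧ i ≤ e 1) ∨ N ^ 3 ≤ e 1 := by
  unfold stair TN
  simp only [Set.mem_setOf_eq, Finset.mem_union, Finset.mem_image, Finset.mem_range,
    Finset.mem_singleton]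
  constructor
  · rintro ⟨a, (⟨i, hi, rfl⟩ | rfl), hle⟩
    · exact Or.inl ⟨i, hi, by simpa using (fe_le_iff.mp hle)⟩
    · exact Or.inr (by simpa using (fe_le_iff.mp hle).2)
  · rintro (⟨i, hi, h1, h2⟩ | h)
    · exact ⟨fe (N - i) i, Or.inl ⟨i, hi, rfl⟩, fe_le_iff.mpr ⟨h1, h2⟩⟩
    · exact ⟨fe 0 (N ^ 3), Or.inr rfl, fe_le_iff.mpr ⟨Nat.zero_le _, h⟩⟩

lemma mem_SN_iff {N : ℕ} {e : Fin 2 →₀ ℕ} :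
    e ∈ SN N ↔ e 0 < N ∧ e 1 < N ^ 3 ∧ e 0 + min (e 1) (N - 1) < N := by
  unfold SN
  simp only [Finset.mem_image, Finset.mem_filter, Finset.mem_product, Finset.mem_range]
  constructor
  · rintro ⟨⟨a, b⟩, ⟨⟨ha, hb⟩, hf⟩, rfl⟩
    simpa using ⟨ha, hb, hf⟩
  · rintro ⟨h0, h1, h2⟩
    exact ⟨(e 0, e 1), ⟨⟨h0, h1⟩, h2⟩, fe_eq_self e⟩

lemma SN_compl {N : ℕ} (hN : 1 ≤ N) (e : Fin 2 →₀ ℕ) : e ∈ SN N ↔ e ∉ stair (TN N) := by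
  rw [mem_SN_iff, mem_stair_TN]
  constructor
  · rintro ⟨h0, h1, h2⟩ (⟨i, hi, hi1, hi2⟩ | h) <;> omega
  · intro h
    have h1 : ¬ N ^ 3 ≤ e 1 := fun hh => h (Or.inr hh)
    have h2 : ¬ (N - min (e 1) (N - 1) ≤ e 0 ∧ min (e 1) (N - 1) ≤ e 1) :=
      fun hh => h (Or.inl ⟨min (e 1) (N - 1), by omega, hh⟩)
    refine ⟨?_, ?_, ?_⟩ <;> omega

lemma card_SN_lower {N : ℕ} (hN : 1 ≤ N) : N ^ 3 ≤ (SN N).card := by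
  classical
  have hinj : Set.InjOn (fun p : ℕ × ℕ => fe p.1 p.2)
      ↑((Finset.range N ×ˢ Finset.range (N ^ 3)).filter fun p => p.1 + min p.2 (N - 1) < N) := by
    intro p _ q _ h
    obtain ⟨h1, h2⟩ := fe_inj h
    exact Prod.ext h1 h2
  rw [SN, Finset.card_image_of_injOn hinj]
  calc N ^ 3 = ({0} ×ˢ Finset.range (N ^ 3)).card := by simp
    _ ≤ _ := by
        apply Finset.card_le_card
        intro p hp
        simp only [Finset.mem_product, Finset.mem_singleton, Finset.mem_range] at hp
        simp only [Finset.mem_filter, Finset.mem_product, Finset.mem_range]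
        omega

lemma card_SN_upper {N : ℕ} (hN : 1 ≤ N) : (SN N).card ≤ N ^ 3 + 1 * N ^ 2 := by
  classical
  calc (SN N).card
      ≤ ((Finset.range N ×ˢ Finset.range (N ^ 3)).filter fun p => p.1 + min p.2 (N - 1) < N).card :=
        Finset.card_image_le
    _ ≤ (({0} ×ˢ Finset.range (N ^ 3)) ∪ (Finset.range N ×ˢ Finset.range N)).card := by
        apply Finset.card_le_card
        intro p hp
        simp only [Finset.mem_filter, Finset.mem_product, Finset.mem_range] at hp
        simp only [Finset.mem_union, Finset.mem_product, Finset.mem_singleton, Finset.mem_range]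
        omega
    _ ≤ ({0} ×ˢ Finset.range (N ^ 3)).card + (Finset.range N ×ˢ Finset.range N).card :=
        Finset.card_union_le _ _
    _ ≤ N ^ 3 + 1 * N ^ 2 := by simp [pow_two]

lemma stmtIdeal_eq (N : ℕ) : stmtIdeal K N = idealOf K (TN N) := by
  unfold stmtIdeal idealOf
  congr 1
  ext g
  simp only [Set.mem_union, Set.mem_range, Set.mem_singleton_iff, Set.mem_image,
    Finset.mem_coe, TN, Finset.mem_union, Finset.mem_image, Finset.mem_range,
    Finset.mem_singleton]
  constructor
  · rintro (⟨i, rfl⟩ | rfl)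
    · exact ⟨fe (N - i) i, Or.inl ⟨i, i.2, rfl⟩, mono_fe _ _⟩
    · exact ⟨fe 0 (N ^ 3), Or.inr rfl, by simp [mono_fe]⟩
  · rintro ⟨a, (⟨i, hi, rfl⟩ | rfl), rfl⟩
    · exact Or.inl ⟨⟨i, hi⟩, (mono_fe _ _).symm⟩
    · right; simp [mono_fe]

/-- exponents for the ideal `(x, y^{N³})` -/
noncomputable def TN' (N : ℕ) : Finset (Fin 2 →₀ ℕ) := {fe 1 0, fe 0 (N ^ 3)}

noncomputable def SN' (N : ℕ) : Finset (Fin 2 →₀ ℕ) := (Finset.range (N ^ 3)).image (fe 0)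

lemma X0_mem_idealOf_TN' {N : ℕ} : (X 0 : MvPowerSeries (Fin 2) K) ∈ idealOf K (TN' N) := by
  refine Ideal.subset_span ⟨fe 1 0, by simp [TN'], by simp [mono_fe]⟩

lemma SN'_compl {N : ℕ} (e : Fin 2 →₀ ℕ) : e ∈ SN' N ↔ e ∉ stair (TN' N) := by
  unfold SN' stair TN'
  simp only [Finset.mem_image, Finset.mem_range, Set.mem_setOf_eq, Finset.mem_insert,
    Finset.mem_singleton]
  constructor
  · rintro ⟨b, hb, rfl⟩ ⟨a, (rfl | rfl), hle⟩
    · have := fe_le_iff.mp hle; simp at this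
    · have := fe_le_iff.mp hle; simp at this; omega
  · intro h
    have h1 : ¬ (1 ≤ e 0) := fun hh => h ⟨fe 1 0, Or.inl rfl, fe_le_iff.mpr ⟨hh, Nat.zero_le _⟩⟩
    have h2 : ¬ (N ^ 3 ≤ e 1) := fun hh => h ⟨fe 0 (N ^ 3), Or.inr rfl, fe_le_iff.mpr ⟨Nat.zero_le _, hh⟩⟩
    refine ⟨e 1, by omega, ?_⟩
    rw [show (0 : ℕ) = e 0 by omega, fe_eq_self]

lemma card_SN' (N : ℕ) : (SN' N).card = N ^ 3 := by
  rw [SN', Finset.card_image_of_injOn (fun a _ b _ h => (fe_inj h).2), Finset.card_range]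

lemma sup_X0_eq {N : ℕ} (hN : 1 ≤ N) :
    stmtIdeal K N ⊔ Ideal.span {(X 0 : MvPowerSeries (Fin 2) K)} = idealOf K (TN' N) := by
  apply le_antisymm
  · apply sup_le
    · rw [stmtIdeal, Ideal.span_le]
      rintro g (⟨i, rfl⟩ | rfl)
      · have hx : (X 0 : MvPowerSeries (Fin 2) K) ∈ idealOf K (TN' N) := X0_mem_idealOf_TN'
        have hrw : (X 0 : MvPowerSeries (Fin 2) K) ^ (N - (i : ℕ)) * X 1 ^ (i : ℕ)
            = (X 0 ^ (N - (i : ℕ) - 1) * X 1 ^ (i : ℕ)) * X 0 := by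
          rw [mul_right_comm, ← pow_succ, show N - (i : ℕ) - 1 + 1 = N - (i : ℕ) by omega]
        show (X 0 : MvPowerSeries (Fin 2) K) ^ (N - (i : ℕ)) * X 1 ^ (i : ℕ)
          ∈ (idealOf K (TN' N) : Set (MvPowerSeries (Fin 2) K))
        rw [SetLike.mem_coe, hrw]
        exact Ideal.mul_mem_left _ _ hx
      · exact Ideal.subset_span ⟨fe 0 (N ^ 3), by simp [TN'], by simp [mono_fe]⟩
    · rw [Ideal.span_le]
      rintro g rfl
      exact X0_mem_idealOf_TN'
  · rw [idealOf, Ideal.span_le]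
    rintro g ⟨a, ha, rfl⟩
    simp only [TN', Finset.coe_insert, Set.mem_insert_iff, Finset.coe_singleton,
      Set.mem_singleton_iff] at ha
    rcases ha with rfl | rfl
    · exact Ideal.mem_sup_right (Ideal.subset_span (by simp [mono_fe]))
    · refine Ideal.mem_sup_left ?_
      rw [stmtIdeal]
      exact Ideal.subset_span (Or.inr (by simp [mono_fe]))

end Stmt13
end Stmt13Aux

/-- with `c = x`, one has `I_N ⊆ m^N`, `ℓ(R/I_N) = N³ + O(N²)`,
`ℓ(R/(I_N, c)) = N³`, and the ratio `ℓ(R/(I_N,c))/ℓ(R/I_N)` tends to `1`. -/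
theorem stmt_13 (K : Type*) [Field K] :
    (∀ N : ℕ, stmtIdeal K N ≤
      (Ideal.span ({MvPowerSeries.X 0, MvPowerSeries.X 1} : Set (MvPowerSeries (Fin 2) K))) ^ N) ∧
    (∃ C : ℕ, ∀ N : ℕ, 1 ≤ N →
      N ^ 3 ≤ flength (MvPowerSeries (Fin 2) K)
        (MvPowerSeries (Fin 2) K ⧸ stmtIdeal K N) ∧
      flength (MvPowerSeries (Fin 2) K) (MvPowerSeries (Fin 2) K ⧸ stmtIdeal K N) ≤
        N ^ 3 + C * N ^ 2) ∧
    (∀ N : ℕ, 1 ≤ N →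
      flength (MvPowerSeries (Fin 2) K)
        (MvPowerSeries (Fin 2) K ⧸
          (stmtIdeal K N ⊔ Ideal.span ({MvPowerSeries.X 0} : Set (MvPowerSeries (Fin 2) K)))) =
        N ^ 3) ∧
    Filter.Tendsto
      (fun N : ℕ =>
        (flength (MvPowerSeries (Fin 2) K)
          (MvPowerSeries (Fin 2) K ⧸
            (stmtIdeal K N ⊔ Ideal.span ({MvPowerSeries.X 0} : Set (MvPowerSeries (Fin 2) K)))) : ℝ) /
        (flength (MvPowerSeries (Fin 2) K) (MvPowerSeries (Fin 2) K ⧸ stmtIdeal K N) : ℝ))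
      Filter.atTop (nhds 1) := by
  classical
  have part2 : ∀ N : ℕ, 1 ≤ N →
      flength (MvPowerSeries (Fin 2) K) (MvPowerSeries (Fin 2) K ⧸ stmtIdeal K N)
        = (Stmt13.SN N).card := by
    intro N hN
    rw [Stmt13.stmtIdeal_eq]
    exact Stmt13.flength_idealOf _ _ (Stmt13.SN_compl hN)
  have part3 : ∀ N : ℕ, 1 ≤ N →
      flength (MvPowerSeries (Fin 2) K)
        (MvPowerSeries (Fin 2) K ⧸
          (stmtIdeal K N ⊔ Ideal.span ({MvPowerSeries.X 0} : Set (MvPowerSeries (Fin 2) K)))) =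
        N ^ 3 := by
    intro N hN
    rw [Stmt13.sup_X0_eq hN, Stmt13.flength_idealOf _ _ Stmt13.SN'_compl, Stmt13.card_SN']
  have cardpos : ∀ N : ℕ, 1 ≤ N → (0:ℝ) < ((Stmt13.SN N).card : ℝ) := by
    intro N hN
    have h3 : 0 < N ^ 3 := by positivity
    have := Stmt13.card_SN_lower hN
    exact_mod_cast by omega
  refine ⟨?_, ⟨1, fun N hN => ?_⟩, part3, ?_⟩
  · -- part 1 : I_N ⊆ m ^ N
    intro N
    rw [stmtIdeal, Ideal.span_le]
    have h0 : (MvPowerSeries.X 0 : MvPowerSeries (Fin 2) K)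
        ∈ Ideal.span ({MvPowerSeries.X 0, MvPowerSeries.X 1} : Set (MvPowerSeries (Fin 2) K)) :=
      Ideal.subset_span (Set.mem_insert _ _)
    have h1 : (MvPowerSeries.X 1 : MvPowerSeries (Fin 2) K)
        ∈ Ideal.span ({MvPowerSeries.X 0, MvPowerSeries.X 1} : Set (MvPowerSeries (Fin 2) K)) :=
      Ideal.subset_span (Set.mem_insert_of_mem _ rfl)
    rintro g (⟨i, rfl⟩ | rfl)
    · rw [SetLike.mem_coe]
      have := Ideal.mul_mem_mul (Ideal.pow_mem_pow h0 (N - (i : ℕ))) (Ideal.pow_mem_pow h1 (i : ℕ))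
      rw [← pow_add, Nat.sub_add_cancel i.2.le] at this
      exact this
    · rw [SetLike.mem_coe]
      have hNle : N ≤ N ^ 3 := Nat.le_self_pow (by norm_num) N
      have helem : (MvPowerSeries.X 1 : MvPowerSeries (Fin 2) K) ^ (N ^ 3)
          = MvPowerSeries.X 1 ^ (N ^ 3 - N) * MvPowerSeries.X 1 ^ N := by
        rw [← pow_add, Nat.sub_add_cancel hNle]
      rw [helem]
      exact Ideal.mul_le_right
        (Ideal.mul_mem_mul (Ideal.pow_mem_pow h1 (N ^ 3 - N)) (Ideal.pow_mem_pow h1 N))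
  · -- part 2
    rw [part2 N hN]
    exact ⟨Stmt13.card_SN_lower hN, Stmt13.card_SN_upper hN⟩
  · -- part 4
    have hlow : Filter.Tendsto (fun N : ℕ => (N : ℝ) / ((N : ℝ) + 1)) Filter.atTop (nhds 1) :=
      tendsto_natCast_div_add_atTop (1 : ℝ)
    apply tendsto_of_tendsto_of_tendsto_of_le_of_le' hlow tendsto_const_nhds
    · filter_upwards [Filter.eventually_ge_atTop 1] with N hN
      rw [part3 N hN, part2 N hN]
      have hl : N ^ 3 ≤ (Stmt13.SN N).card := Stmt13.card_SN_lower hN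
      have hu : (Stmt13.SN N).card ≤ N ^ 3 + 1 * N ^ 2 := Stmt13.card_SN_upper hN
      have hL0 := cardpos N hN
      rw [div_le_div_iff₀ (by positivity) hL0]
      have c1 : ((Stmt13.SN N).card : ℝ) ≤ (N:ℝ) ^ 3 + (N:ℝ) ^ 2 := by
        exact_mod_cast (by omega : (Stmt13.SN N).card ≤ N ^ 3 + N ^ 2)
      have c2 : (1:ℝ) ≤ (N:ℝ) := by exact_mod_cast hN
      push_cast
      nlinarith [c1, c2]
    · filter_upwards [Filter.eventually_ge_atTop 1] with N hN
      rw [part3 N hN, part2 N hN]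
      have hl : N ^ 3 ≤ (Stmt13.SN N).card := Stmt13.card_SN_lower hN
      rw [div_le_one (cardpos N hN)]
      exact_mod_cast hl
end
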